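/- Let $\rho_1, \rho_2 > 0$, $\kappa \ge 0$, $d \ge 1$, and $\lambda > 0$, $A > 0$, $B \ge 0$ be real numbers. Suppose that for every $\nu > 0$: $\left(\lambda^2 - \frac{\lambda^2}{d} + \frac{\kappa \lambda}{\nu} - \rho_1 \lambda\right) A \ge (\rho_2 - \nu \lambda) B$. Then $\lambda \ge \frac{\rho_1 \rho_2}{\frac{d-1}{d}\rho_2 + \kappa}$. -/

import Mathlib

theorem stmt_12 (ρ₁ ρ₂ κ d lam A B : ℝ)
    (hρ₁ : 0 < ρ₁) (hρ₂ : 0 < ρ₂) (hκ : 0 ≤ κ) (hd : 1 ≤ d)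
    (hlam : 0 < lam) (hA : 0 < A) (hB : 0 ≤ B)
    (h : ∀ ν > (0:ℝ),
      (lam ^ 2 - lam ^ 2 / d + κ * lam / ν - ρ₁ * lam) * A ≥ (ρ₂ - ν * lam) * B) :
    lam ≥ ρ₁ * ρ₂ / ((d - 1) / d * ρ₂ + κ) := by
  have hd0 : (0:ℝ) < d := lt_of_lt_of_le one_pos hd
  have hν : (0:ℝ) < ρ₂ / lam := div_pos hρ₂ hlam
  have key := h (ρ₂ / lam) hν
  have hz : ρ₂ - (ρ₂ / lam) * lam = 0 := by field_simp; ring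
  rw [hz, zero_mul] at key
  have hcoef : 0 ≤ lam ^ 2 - lam ^ 2 / d + κ * lam / (ρ₂ / lam) - ρ₁ * lam :=
    nonneg_of_mul_nonneg_right (by linarith [key] : 0 ≤ A * (lam ^ 2 - lam ^ 2 / d + κ * lam / (ρ₂ / lam) - ρ₁ * lam)) hA
  have hmain : lam * ((d - 1) / d * ρ₂ + κ) ≥ ρ₁ * ρ₂ := by
    have h2 : κ * lam / (ρ₂ / lam) = κ * lam ^ 2 / ρ₂ := by
      field_simp
    rw [h2] at hcoef
    have := mul_le_mul_of_nonneg_left hcoef (le_of_lt hρ₂)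
    rw [mul_zero] at this
    have hEq : ρ₂ * (lam ^ 2 - lam ^ 2 / d + κ * lam ^ 2 / ρ₂ - ρ₁ * lam)
        = lam * (lam * ((d - 1) / d * ρ₂ + κ) - ρ₁ * ρ₂) := by
      field_simp
    rw [hEq] at this
    nlinarith [mul_pos hlam hlam]
  have hden : 0 ≤ (d - 1) / d * ρ₂ + κ :=
    add_nonneg (mul_nonneg (div_nonneg (by linarith) hd0.le) hρ₂.le) hκ
  rcases hden.lt_or_eq with hpos | heq
  · rw [ge_iff_le, div_le_iff₀ hpos]
    linarith [hmain]
  · rw [← heq, div_zero]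
    exact hlam.le
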